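/- For every integer n ≥ 7, |U_{2,n−2}| − |U_{n−2,2}| ≥ n(n−1)/2. -/
import Mathlib


/-- The submonoid of transformations of `Fin n` generated by `X`:
all finite compositions of elements of `X` (including the identity). -/
def MGen {n : ℕ} (X : Set (Fin n → Fin n)) : Set (Fin n → Fin n) :=
  {f | ∃ l : List (Fin n → Fin n), (∀ g ∈ l, g ∈ X) ∧ f = l.foldr (· ∘ ·) id}

/-- The rank of a transformation: the number of elements of its image. -/
def rank {n : ℕ} (f : Fin n → Fin n) : ℕ := (Finset.image f Finset.univ).card

/-- The permutation of `Z_n = {1,…,n}` (coded as `Fin n`, with `i : Fin n` standing for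
`i+1 ∈ Z_n`) with cycle decomposition `(1 2 ⋯ k)(k+1 k+2 ⋯ n)`. -/
def twoCycle (n k : ℕ) (i : Fin n) : Fin n :=
  ⟨(if i.val + 1 = k then 0 else if i.val + 1 = n then k else i.val + 1) % n,
    Nat.mod_lt _ i.pos⟩

/-- The set `U_{k,l} ⊆ T_n` (with `l = n - k`): all `γ` such that exactly one of the
following holds: (1) `γ = α^m` for some `m ≥ 1`, where `α = (1 ⋯ k)(k+1 ⋯ n)`;
(2) `γ(i) = γ(j)` for some `i ∈ {1,…,k}`, `j ∈ {k+1,…,n}`, and some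
`m ∈ {k+1,…,n}` is not in the image of `γ`. -/
def Ukl (n k : ℕ) : Set (Fin n → Fin n) :=
  {γ | Xor'
    (∃ m : ℕ, 1 ≤ m ∧ γ = (twoCycle n k)^[m])
    ((∃ i j : Fin n, i.val < k ∧ k ≤ j.val ∧ γ i = γ j) ∧
      ∃ m : Fin n, k ≤ m.val ∧ m ∉ Set.range γ)}

namespace L319

def c (n : ℕ) (hn : 7 ≤ n) (k : ℕ) : Fin n := ⟨k % n, Nat.mod_lt _ (by omega)⟩

lemma c_val (n : ℕ) (hn : 7 ≤ n) (k : ℕ) (hk : k < n) : (c n hn k).val = k :=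
  Nat.mod_eq_of_lt hk

def rho (n : ℕ) (hn : 7 ≤ n) (i : Fin n) : Fin n :=
  ⟨(i.val + 2) % n, Nat.mod_lt _ (by omega)⟩

def rhoInv (n : ℕ) (hn : 7 ≤ n) (i : Fin n) : Fin n :=
  ⟨(i.val + (n - 2)) % n, Nat.mod_lt _ (by omega)⟩

lemma rho_val (n : ℕ) (hn : 7 ≤ n) (x : Fin n) :
    (rho n hn x).val = if x.val + 2 < n then x.val + 2 else x.val + 2 - n := by
  simp only [rho]
  split_ifs with h
  · exact Nat.mod_eq_of_lt h
  · have hx := x.isLt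
    rw [Nat.mod_eq_sub_mod (by omega)]
    exact Nat.mod_eq_of_lt (by omega)

lemma twoCycle_val (n k : ℕ) (hk0 : 0 < k) (hkn : k < n) (x : Fin n) :
    (twoCycle n k x).val = if x.val + 1 = k then 0 else if x.val + 1 = n then k
      else x.val + 1 := by
  have hx := x.isLt
  simp only [twoCycle]
  split_ifs with h1 h2
  · exact Nat.zero_mod n
  · exact Nat.mod_eq_of_lt hkn
  · exact Nat.mod_eq_of_lt (by omega)

lemma rho_rhoInv (n : ℕ) (hn : 7 ≤ n) (i : Fin n) : rho n hn (rhoInv n hn i) = i := by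
  simp only [rho, rhoInv]
  apply Fin.ext
  simp only [Nat.mod_add_mod]
  have : i.val + (n - 2) + 2 = i.val + n := by omega
  rw [this, Nat.add_mod_right, Nat.mod_eq_of_lt i.isLt]

lemma rhoInv_rho (n : ℕ) (hn : 7 ≤ n) (i : Fin n) : rhoInv n hn (rho n hn i) = i := by
  simp only [rho, rhoInv]
  apply Fin.ext
  simp only [Nat.mod_add_mod]
  have : i.val + 2 + (n - 2) = i.val + n := by omega
  rw [this, Nat.add_mod_right, Nat.mod_eq_of_lt i.isLt]

lemma rho_inj (n : ℕ) (hn : 7 ≤ n) : Function.Injective (rho n hn) :=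
  Function.LeftInverse.injective (rhoInv_rho n hn)

lemma rho_surj (n : ℕ) (hn : 7 ≤ n) : Function.Surjective (rho n hn) :=
  Function.RightInverse.surjective (rho_rhoInv n hn)

def conj (n : ℕ) (hn : 7 ≤ n) (γ : Fin n → Fin n) : Fin n → Fin n :=
  rho n hn ∘ γ ∘ rhoInv n hn

lemma conj_injective (n : ℕ) (hn : 7 ≤ n) : Function.Injective (conj n hn) := by
  intro a b h
  funext x
  have := congrFun h (rho n hn x)
  simp only [conj, Function.comp_apply, rhoInv_rho] at this
  exact rho_inj n hn this

lemma conj_twoCycle (n : ℕ) (hn : 7 ≤ n) (i : Fin n) :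
    rho n hn (twoCycle n (n - 2) i) = twoCycle n 2 (rho n hn i) := by
  have hi := i.isLt
  rw [Fin.ext_iff, rho_val, twoCycle_val n (n-2) (by omega) (by omega),
    twoCycle_val n 2 (by omega) (by omega), rho_val]
  split_ifs <;> omega

lemma conj_iter (n : ℕ) (hn : 7 ≤ n) (m : ℕ) (x : Fin n) :
    rho n hn ((twoCycle n (n - 2))^[m] x) = (twoCycle n 2)^[m] (rho n hn x) := by
  induction m with
  | zero => simp
  | succ k ih =>
    rw [Function.iterate_succ_apply', Function.iterate_succ_apply',
      conj_twoCycle n hn, ih]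

lemma twoCycle2_inj (n : ℕ) (hn : 7 ≤ n) : Function.Injective (twoCycle n 2) := by
  intro u v h
  have hu := u.isLt
  have hv := v.isLt
  rw [Fin.ext_iff, twoCycle_val n 2 (by omega) (by omega),
    twoCycle_val n 2 (by omega) (by omega)] at h
  apply Fin.ext
  split_ifs at h <;> omega

lemma twoCycleN2_inj (n : ℕ) (hn : 7 ≤ n) : Function.Injective (twoCycle n (n-2)) := by
  intro u v h
  have := conj_twoCycle n hn u
  have h2 : twoCycle n 2 (rho n hn u) = twoCycle n 2 (rho n hn v) := by
    rw [← conj_twoCycle n hn u, ← conj_twoCycle n hn v, h]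
  exact rho_inj n hn (twoCycle2_inj n hn h2)

end L319

namespace L319

lemma c_ne (n : ℕ) (hn : 7 ≤ n) {k l : ℕ} (hk : k < n) (hl : l < n) (h : k ≠ l) :
    c n hn k ≠ c n hn l := by
  intro he
  apply h
  have := congrArg Fin.val he
  rwa [c_val n hn k hk, c_val n hn l hl] at this

def s0 (n : ℕ) (hn : 7 ≤ n) : Equiv.Perm (Fin n) :=
  Equiv.swap (c n hn 0) (c n hn (n-1))

def s1 (n : ℕ) (hn : 7 ≤ n) : Equiv.Perm (Fin n) :=
  Equiv.swap (c n hn 1) (c n hn (n-2))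

def s2 (n : ℕ) (hn : 7 ≤ n) : Equiv.Perm (Fin n) := (s1 n hn).trans (s0 n hn)

-- symm evaluations
lemma s0_symm_0 (n : ℕ) (hn : 7 ≤ n) : (s0 n hn).symm (c n hn 0) = c n hn (n-1) := by
  simp [s0, Equiv.symm_swap, Equiv.swap_apply_left]
lemma s0_symm_1 (n : ℕ) (hn : 7 ≤ n) : (s0 n hn).symm (c n hn 1) = c n hn 1 := by
  rw [s0, Equiv.symm_swap, Equiv.swap_apply_of_ne_of_ne
    (c_ne n hn (by omega) (by omega) (by omega)) (c_ne n hn (by omega) (by omega) (by omega))]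
lemma s0_symm_n2 (n : ℕ) (hn : 7 ≤ n) : (s0 n hn).symm (c n hn (n-2)) = c n hn (n-2) := by
  rw [s0, Equiv.symm_swap, Equiv.swap_apply_of_ne_of_ne
    (c_ne n hn (by omega) (by omega) (by omega)) (c_ne n hn (by omega) (by omega) (by omega))]
lemma s0_symm_n1 (n : ℕ) (hn : 7 ≤ n) : (s0 n hn).symm (c n hn (n-1)) = c n hn 0 := by
  simp [s0, Equiv.symm_swap, Equiv.swap_apply_right]
lemma s1_symm_0 (n : ℕ) (hn : 7 ≤ n) : (s1 n hn).symm (c n hn 0) = c n hn 0 := by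
  rw [s1, Equiv.symm_swap, Equiv.swap_apply_of_ne_of_ne
    (c_ne n hn (by omega) (by omega) (by omega)) (c_ne n hn (by omega) (by omega) (by omega))]
lemma s1_symm_1 (n : ℕ) (hn : 7 ≤ n) : (s1 n hn).symm (c n hn 1) = c n hn (n-2) := by
  simp [s1, Equiv.symm_swap, Equiv.swap_apply_left]
lemma s1_symm_n2 (n : ℕ) (hn : 7 ≤ n) : (s1 n hn).symm (c n hn (n-2)) = c n hn 1 := by
  simp [s1, Equiv.symm_swap, Equiv.swap_apply_right]
lemma s1_symm_n1 (n : ℕ) (hn : 7 ≤ n) : (s1 n hn).symm (c n hn (n-1)) = c n hn (n-1) := by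
  rw [s1, Equiv.symm_swap, Equiv.swap_apply_of_ne_of_ne
    (c_ne n hn (by omega) (by omega) (by omega)) (c_ne n hn (by omega) (by omega) (by omega))]

lemma s2_symm (n : ℕ) (hn : 7 ≤ n) (b : Fin n) :
    (s2 n hn).symm b = (s1 n hn).symm ((s0 n hn).symm b) := rfl

lemma mem_range_comp (n : ℕ) (e : Equiv.Perm (Fin n)) (g : Fin n → Fin n) (b : Fin n) :
    b ∈ Set.range (⇑e ∘ g) ↔ e.symm b ∈ Set.range g := by
  constructor
  · rintro ⟨x, hx⟩; exact ⟨x, by simp [← hx]⟩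
  · rintro ⟨x, hx⟩; exact ⟨x, by simp [hx]⟩

lemma mem_range_conj (n : ℕ) (hn : 7 ≤ n) (γ : Fin n → Fin n) (b : Fin n) :
    b ∈ Set.range (conj n hn γ) ↔ rhoInv n hn b ∈ Set.range γ := by
  constructor
  · rintro ⟨x, hx⟩
    refine ⟨rhoInv n hn x, ?_⟩
    have : rho n hn (γ (rhoInv n hn x)) = b := hx
    rw [← this, rhoInv_rho]
  · rintro ⟨y, hy⟩
    refine ⟨rho n hn y, ?_⟩
    show rho n hn (γ (rhoInv n hn (rho n hn y))) = b
    rw [rhoInv_rho, hy, rho_rhoInv]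

lemma surj_conj_iff (n : ℕ) (hn : 7 ≤ n) (γ : Fin n → Fin n) :
    Function.Surjective (conj n hn γ) ↔ Function.Surjective γ := by
  constructor
  · intro h b
    obtain ⟨x, hx⟩ := (mem_range_conj n hn γ (rho n hn b)).mp (h (rho n hn b))
    exact ⟨x, by rwa [rhoInv_rho] at hx⟩
  · intro h b
    exact (mem_range_conj n hn γ b).mpr (h _)

open scoped Classical in
noncomputable def F (n : ℕ) (hn : 7 ≤ n) (γ : Fin n → Fin n) : Fin n → Fin n :=
  if ∃ m : Fin n, 2 ≤ m.val ∧ m ∉ Set.range (conj n hn γ) then conj n hn γ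
  else if Function.Surjective (conj n hn γ) then conj n hn γ
  else if c n hn 0 ∈ Set.range (conj n hn γ) then ⇑(s1 n hn) ∘ conj n hn γ
  else if c n hn 1 ∈ Set.range (conj n hn γ) then ⇑(s0 n hn) ∘ conj n hn γ
  else ⇑(s2 n hn) ∘ conj n hn γ

def perm (n : ℕ) (hn : 7 ≤ n) : Fin 5 → Equiv.Perm (Fin n) := fun i =>
  match i with
  | 0 => Equiv.refl _
  | 1 => Equiv.refl _
  | 2 => s1 n hn
  | 3 => s0 n hn
  | 4 => s2 n hn

open scoped Classical in
noncomputable def idx (n : ℕ) (hn : 7 ≤ n) (h : Fin n → Fin n) : Fin 5 :=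
  if Function.Surjective h then 0
  else if c n hn 0 ∉ Set.range h ∨ c n hn 1 ∉ Set.range h then 1
  else if c n hn (n-1) ∈ Set.range h then 2
  else if c n hn (n-2) ∈ Set.range h then 3
  else 4

end L319

namespace L319

lemma mem_Ukl2_of (n : ℕ) (hn : 7 ≤ n) (h : Fin n → Fin n) (p q : Fin n)
    (hp : p.val < 2) (hq : 2 ≤ q.val) (hpq : h p = h q) (m : Fin n)
    (hm : 2 ≤ m.val) (hmr : m ∉ Set.range h) : h ∈ Ukl n 2 := by
  refine Or.inr ⟨⟨⟨p, q, hp, hq, hpq⟩, ⟨m, hm, hmr⟩⟩, ?_⟩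
  rintro ⟨k, hk, rfl⟩
  have := ((twoCycle2_inj n hn).iterate k) hpq
  rw [this] at hp
  omega

lemma mem_Ukl2_pow (n : ℕ) (hn : 7 ≤ n) (m : ℕ) (hm : 1 ≤ m) :
    (twoCycle n 2)^[m] ∈ Ukl n 2 := by
  refine Or.inl ⟨⟨m, hm, rfl⟩, ?_⟩
  rintro ⟨⟨i, j, hi, hj, hij⟩, -⟩
  have := ((twoCycle2_inj n hn).iterate m) hij
  rw [this] at hi
  omega

lemma F_spec (n : ℕ) (hn : 7 ≤ n) (γ : Fin n → Fin n) (hγ : γ ∈ Ukl n (n-2)) :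
    F n hn γ = ⇑(perm n hn (idx n hn (F n hn γ))) ∘ conj n hn γ ∧
    F n hn γ ∈ Ukl n 2 ∧
    (Function.Surjective (F n hn γ) ∨
      (c n hn 0 ∉ Set.range (F n hn γ) ∨ c n hn 1 ∉ Set.range (F n hn γ)) ∨
      c n hn (n-1) ∉ Set.range (F n hn γ) ∨ c n hn (n-2) ∉ Set.range (F n hn γ)) := by
  rcases hγ with ⟨⟨m, hm, rfl⟩, -⟩ | ⟨⟨⟨i, j, hi, hj, hij⟩, ⟨m₀, hm₀, hm₀r⟩⟩, -⟩
  · -- power case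
    have hinj : Function.Injective ((twoCycle n (n-2))^[m]) :=
      (twoCycleN2_inj n hn).iterate m
    have hsurj : Function.Surjective (conj n hn ((twoCycle n (n-2))^[m])) :=
      (surj_conj_iff n hn _).mpr (Finite.injective_iff_surjective.mp hinj)
    have hif1 : ¬∃ m' : Fin n, 2 ≤ m'.val ∧
        m' ∉ Set.range (conj n hn ((twoCycle n (n-2))^[m])) := by
      rintro ⟨m', -, hm'⟩; exact hm' (hsurj m')
    have hF : F n hn ((twoCycle n (n-2))^[m]) = conj n hn ((twoCycle n (n-2))^[m]) := by
      rw [F, if_neg hif1, if_pos hsurj]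
    have hc : conj n hn ((twoCycle n (n-2))^[m]) = (twoCycle n 2)^[m] := by
      funext x
      show rho n hn ((twoCycle n (n-2))^[m] (rhoInv n hn x)) = _
      rw [conj_iter, rho_rhoInv]
    have hidx : idx n hn (F n hn ((twoCycle n (n-2))^[m])) = 0 := by
      rw [idx, if_pos (hF ▸ hsurj)]
    refine ⟨?_, ?_, Or.inl (hF ▸ hsurj)⟩
    · rw [hidx, hF]; rfl
    · rw [hF, hc]; exact mem_Ukl2_pow n hn m hm
  · -- condition-2 case
    set g := conj n hn γ with hg
    have hji := j.isLt
    have hii := i.isLt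
    have hmm := m₀.isLt
    have hpj : (rho n hn j).val < 2 := by rw [rho_val]; split_ifs <;> omega
    have hqi : 2 ≤ (rho n hn i).val := by rw [rho_val]; split_ifs <;> omega
    have hgpq : g (rho n hn j) = g (rho n hn i) := by
      show rho n hn (γ (rhoInv n hn (rho n hn j))) = rho n hn (γ (rhoInv n hn (rho n hn i)))
      rw [rhoInv_rho, rhoInv_rho, hij]
    have hb₀ : rho n hn m₀ ∉ Set.range g := by
      rw [hg, mem_range_conj, rhoInv_rho]; exact hm₀r
    have hb₀' : rho n hn m₀ = c n hn 0 ∨ rho n hn m₀ = c n hn 1 := by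
      have hv : (rho n hn m₀).val = 0 ∨ (rho n hn m₀).val = 1 := by
        rw [rho_val]; split_ifs <;> omega
      rcases hv with hv | hv
      · exact Or.inl (Fin.ext (by rw [hv, c_val n hn 0 (by omega)]))
      · exact Or.inr (Fin.ext (by rw [hv, c_val n hn 1 (by omega)]))
    have hnsurj : ¬ Function.Surjective g := fun hs => hb₀ (hs _)
    by_cases hif1 : ∃ m' : Fin n, 2 ≤ m'.val ∧ m' ∉ Set.range g
    · -- branch A
      have hF : F n hn γ = g := by rw [F, if_pos hif1]
      obtain ⟨m', hm'2, hm'r⟩ := hif1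
      have hd : c n hn 0 ∉ Set.range (F n hn γ) ∨ c n hn 1 ∉ Set.range (F n hn γ) := by
        rw [hF]
        rcases hb₀' with h | h
        · exact Or.inl (h ▸ hb₀)
        · exact Or.inr (h ▸ hb₀)
      have hidx : idx n hn (F n hn γ) = 1 := by
        rw [idx, if_neg (hF ▸ hnsurj), if_pos hd]
      refine ⟨by rw [hidx, hF]; rfl, ?_, Or.inr (Or.inl hd)⟩
      rw [hF]
      exact mem_Ukl2_of n hn g _ _ hpj hqi hgpq m' hm'2 hm'r
    · have hall : ∀ m' : Fin n, 2 ≤ m'.val → m' ∈ Set.range g :=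
        fun m' h2 => by_contra fun hc => hif1 ⟨m', h2, hc⟩
      by_cases h0 : c n hn 0 ∈ Set.range g
      · -- branch B1
        have h1 : c n hn 1 ∉ Set.range g := by
          rcases hb₀' with h | h
          · rw [← h] at h0; exact absurd h0 hb₀
          · exact h ▸ hb₀
        have hF : F n hn γ = ⇑(s1 n hn) ∘ g := by
          rw [F, if_neg hif1, if_neg hnsurj, if_pos h0]
        have hr0 : c n hn 0 ∈ Set.range (F n hn γ) := by
          rw [hF, mem_range_comp, s1_symm_0]; exact h0
        have hr1 : c n hn 1 ∈ Set.range (F n hn γ) := by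
          rw [hF, mem_range_comp, s1_symm_1]
          exact hall _ (by rw [c_val n hn (n-2) (by omega)]; omega)
        have hrn1 : c n hn (n-1) ∈ Set.range (F n hn γ) := by
          rw [hF, mem_range_comp, s1_symm_n1]
          exact hall _ (by rw [c_val n hn (n-1) (by omega)]; omega)
        have hrn2 : c n hn (n-2) ∉ Set.range (F n hn γ) := by
          rw [hF, mem_range_comp, s1_symm_n2]; exact h1
        have hns : ¬ Function.Surjective (F n hn γ) := by
          rw [hF, Equiv.comp_surjective]; exact hnsurj
        have hidx : idx n hn (F n hn γ) = 2 := by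
          rw [idx, if_neg hns, if_neg (by push_neg; exact ⟨hr0, hr1⟩), if_pos hrn1]
        refine ⟨by rw [hidx, hF]; rfl, ?_, Or.inr (Or.inr (Or.inr hrn2))⟩
        rw [hF]
        exact mem_Ukl2_of n hn _ _ _ hpj hqi (by simp [hgpq]) (c n hn (n-2))
          (by rw [c_val n hn (n-2) (by omega)]; omega) (hF ▸ hrn2)
      · by_cases h1 : c n hn 1 ∈ Set.range g
        · -- branch B0
          have hF : F n hn γ = ⇑(s0 n hn) ∘ g := by
            rw [F, if_neg hif1, if_neg hnsurj, if_neg h0, if_pos h1]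
          have hr0 : c n hn 0 ∈ Set.range (F n hn γ) := by
            rw [hF, mem_range_comp, s0_symm_0]
            exact hall _ (by rw [c_val n hn (n-1) (by omega)]; omega)
          have hr1 : c n hn 1 ∈ Set.range (F n hn γ) := by
            rw [hF, mem_range_comp, s0_symm_1]; exact h1
          have hrn1 : c n hn (n-1) ∉ Set.range (F n hn γ) := by
            rw [hF, mem_range_comp, s0_symm_n1]; exact h0
          have hns : ¬ Function.Surjective (F n hn γ) := by
            rw [hF, Equiv.comp_surjective]; exact hnsurj
          have hrn2 : c n hn (n-2) ∈ Set.range (F n hn γ) := by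
            rw [hF, mem_range_comp, s0_symm_n2]
            exact hall _ (by rw [c_val n hn (n-2) (by omega)]; omega)
          have hidx : idx n hn (F n hn γ) = 3 := by
            rw [idx, if_neg hns, if_neg (by push_neg; exact ⟨hr0, hr1⟩), if_neg hrn1,
              if_pos hrn2]
          refine ⟨by rw [hidx, hF]; rfl, ?_, Or.inr (Or.inr (Or.inl hrn1))⟩
          rw [hF]
          exact mem_Ukl2_of n hn _ _ _ hpj hqi (by simp [hgpq]) (c n hn (n-1))
            (by rw [c_val n hn (n-1) (by omega)]; omega) (hF ▸ hrn1)
        · -- branch B2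
          have hF : F n hn γ = ⇑(s2 n hn) ∘ g := by
            rw [F, if_neg hif1, if_neg hnsurj, if_neg h0, if_neg h1]
          have hr0 : c n hn 0 ∈ Set.range (F n hn γ) := by
            rw [hF, mem_range_comp, s2_symm, s0_symm_0, s1_symm_n1]
            exact hall _ (by rw [c_val n hn (n-1) (by omega)]; omega)
          have hr1 : c n hn 1 ∈ Set.range (F n hn γ) := by
            rw [hF, mem_range_comp, s2_symm, s0_symm_1, s1_symm_1]
            exact hall _ (by rw [c_val n hn (n-2) (by omega)]; omega)
          have hrn1 : c n hn (n-1) ∉ Set.range (F n hn γ) := by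
            rw [hF, mem_range_comp, s2_symm, s0_symm_n1, s1_symm_0]; exact h0
          have hrn2 : c n hn (n-2) ∉ Set.range (F n hn γ) := by
            rw [hF, mem_range_comp, s2_symm, s0_symm_n2, s1_symm_n2]; exact h1
          have hns : ¬ Function.Surjective (F n hn γ) := by
            rw [hF, Equiv.comp_surjective]; exact hnsurj
          have hidx : idx n hn (F n hn γ) = 4 := by
            rw [idx, if_neg hns, if_neg (by push_neg; exact ⟨hr0, hr1⟩), if_neg hrn1,
              if_neg hrn2]
          refine ⟨by rw [hidx, hF]; rfl, ?_, Or.inr (Or.inr (Or.inl hrn1))⟩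
          rw [hF]
          exact mem_Ukl2_of n hn _ _ _ hpj hqi (by simp [hgpq]) (c n hn (n-1))
            (by rw [c_val n hn (n-1) (by omega)]; omega) (hF ▸ hrn1)

end L319

namespace L319

lemma F_injOn (n : ℕ) (hn : 7 ≤ n) : Set.InjOn (F n hn) (Ukl n (n-2)) := by
  intro a ha b hb h
  have sa := (F_spec n hn a ha).1
  have sb := (F_spec n hn b hb).1
  rw [h] at sa
  have key : ⇑(perm n hn (idx n hn (F n hn b))) ∘ conj n hn a
      = ⇑(perm n hn (idx n hn (F n hn b))) ∘ conj n hn b := sa.symm.trans sb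
  apply conj_injective n hn
  funext x
  exact (perm n hn (idx n hn (F n hn b))).injective (congrFun key x)

def hf (n : ℕ) (hn : 7 ≤ n) (x y : Fin n) : Fin n → Fin n := fun t =>
  if t.val = 1 ∨ t.val = 2 then c n hn 1 else if t.val = 3 then x
  else if t.val = 4 then y else t

lemma hf_fix (n : ℕ) (hn : 7 ≤ n) (x y : Fin n) (t : Fin n)
    (ht : t.val = 0 ∨ 5 ≤ t.val) : hf n hn x y t = t := by
  simp only [hf]
  rw [if_neg (by omega), if_neg (by omega), if_neg (by omega)]

lemma hf_c1 (n : ℕ) (hn : 7 ≤ n) (x y : Fin n) : hf n hn x y (c n hn 1) = c n hn 1 := by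
  simp only [hf]
  rw [if_pos (Or.inl (c_val n hn 1 (by omega)))]

lemma hf_c2 (n : ℕ) (hn : 7 ≤ n) (x y : Fin n) : hf n hn x y (c n hn 2) = c n hn 1 := by
  simp only [hf]
  rw [if_pos (Or.inr (c_val n hn 2 (by omega)))]

lemma hf_c3 (n : ℕ) (hn : 7 ≤ n) (x y : Fin n) : hf n hn x y (c n hn 3) = x := by
  simp only [hf]
  rw [if_neg (by rw [c_val n hn 3 (by omega)]; omega), if_pos (c_val n hn 3 (by omega))]

lemma hf_c4 (n : ℕ) (hn : 7 ≤ n) (x y : Fin n) : hf n hn x y (c n hn 4) = y := by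
  simp only [hf]
  rw [if_neg (by rw [c_val n hn 4 (by omega)]; omega),
    if_neg (by rw [c_val n hn 4 (by omega)]; omega), if_pos (c_val n hn 4 (by omega))]

lemma hf_missing (n : ℕ) (hn : 7 ≤ n) (x y : Fin n) :
    ∃ k : ℕ, 2 ≤ k ∧ k < 5 ∧ c n hn k ∉ Set.range (hf n hn x y) := by
  have key : ∃ k : ℕ, 2 ≤ k ∧ k < 5 ∧ c n hn k ≠ x ∧ c n hn k ≠ y := by
    by_cases h2 : c n hn 2 ≠ x ∧ c n hn 2 ≠ y
    · exact ⟨2, by omega, by omega, h2.1, h2.2⟩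
    · by_cases h3 : c n hn 3 ≠ x ∧ c n hn 3 ≠ y
      · exact ⟨3, by omega, by omega, h3.1, h3.2⟩
      · push_neg at h2 h3
        refine ⟨4, by omega, by omega, ?_, ?_⟩
        · intro hx
          rcases Classical.em (c n hn 2 = x) with h | h
          · exact c_ne n hn (show (2:ℕ) < n by omega) (by omega) (by omega) (h.trans hx.symm)
          · rcases Classical.em (c n hn 3 = x) with h' | h'
            · exact c_ne n hn (show (3:ℕ) < n by omega) (by omega) (by omega) (h'.trans hx.symm)
            · exact c_ne n hn (show (2:ℕ) < n by omega) (show (3:ℕ) < n by omega) (by omega)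
                ((h2 h).trans (h3 h').symm)
        · intro hy
          rcases Classical.em (c n hn 2 = y) with h | h
          · exact c_ne n hn (show (2:ℕ) < n by omega) (by omega) (by omega) (h.trans hy.symm)
          · have h2x : c n hn 2 = x := by_contra fun hh => h (h2 hh)
            rcases Classical.em (c n hn 3 = y) with h' | h'
            · exact c_ne n hn (show (3:ℕ) < n by omega) (by omega) (by omega) (h'.trans hy.symm)
            · have h3x : c n hn 3 = x := by_contra fun hh => h' (h3 hh)
              exact c_ne n hn (show (2:ℕ) < n by omega) (show (3:ℕ) < n by omega) (by omega)
                (h2x.trans h3x.symm)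
  obtain ⟨k, hk2, hk5, hkx, hky⟩ := key
  refine ⟨k, hk2, hk5, ?_⟩
  rintro ⟨t, ht⟩
  have hkval := c_val n hn k (by omega)
  simp only [hf] at ht
  split_ifs at ht with hc1 hc3 hc4
  · have := congrArg Fin.val ht
    rw [c_val n hn 1 (by omega), hkval] at this
    omega
  · exact hkx ht.symm
  · exact hky ht.symm
  · have := congrArg Fin.val ht
    rw [hkval] at this
    omega

lemma hf_mem (n : ℕ) (hn : 7 ≤ n) (x y : Fin n) : hf n hn x y ∈ Ukl n 2 := by
  obtain ⟨k, hk2, hk5, hkr⟩ := hf_missing n hn x y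
  refine mem_Ukl2_of n hn _ (c n hn 1) (c n hn 2) ?_ ?_ ?_ (c n hn k) ?_ hkr
  · rw [c_val n hn 1 (by omega)]; omega
  · rw [c_val n hn 2 (by omega)]
  · rw [hf_c1, hf_c2]
  · rw [c_val n hn k (by omega)]; omega

lemma hf_ne_F (n : ℕ) (hn : 7 ≤ n) (x y : Fin n) (γ : Fin n → Fin n)
    (hγ : γ ∈ Ukl n (n-2)) : F n hn γ ≠ hf n hn x y := by
  intro heq
  obtain ⟨k, hk2, hk5, hkr⟩ := hf_missing n hn x y
  have hr0 : c n hn 0 ∈ Set.range (hf n hn x y) :=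
    ⟨c n hn 0, hf_fix n hn x y _ (Or.inl (c_val n hn 0 (by omega)))⟩
  have hr1 : c n hn 1 ∈ Set.range (hf n hn x y) := ⟨c n hn 1, hf_c1 n hn x y⟩
  have hrn1 : c n hn (n-1) ∈ Set.range (hf n hn x y) :=
    ⟨c n hn (n-1), hf_fix n hn x y _ (Or.inr (by rw [c_val n hn (n-1) (by omega)]; omega))⟩
  have hrn2 : c n hn (n-2) ∈ Set.range (hf n hn x y) :=
    ⟨c n hn (n-2), hf_fix n hn x y _ (Or.inr (by rw [c_val n hn (n-2) (by omega)]; omega))⟩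
  rcases (F_spec n hn γ hγ).2.2 with hs | hd | hd | hd
  · rw [heq] at hs
    exact hkr (hs _)
  · rw [heq] at hd
    rcases hd with hd | hd
    · exact hd hr0
    · exact hd hr1
  · rw [heq] at hd
    exact hd hrn1
  · rw [heq] at hd
    exact hd hrn2

lemma hf_param_inj (n : ℕ) (hn : 7 ≤ n) :
    Function.Injective (fun p : Fin n × Fin n => hf n hn p.1 p.2) := by
  rintro ⟨x, y⟩ ⟨x', y'⟩ h
  simp only at h
  have h3 := congrFun h (c n hn 3)
  have h4 := congrFun h (c n hn 4)
  rw [hf_c3, hf_c3] at h3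
  rw [hf_c4, hf_c4] at h4
  exact Prod.ext h3 h4

end L319


/-- **Lemma 3.19.** For `n ≥ 7`, `|U_{2,n-2}| - |U_{n-2,2}| ≥ n(n-1)/2`. -/
theorem lemma_3_19 (n : ℕ) (hn : 7 ≤ n) :
    (Ukl n (n - 2)).ncard + n * (n - 1) / 2 ≤ (Ukl n 2).ncard := by
  classical
  set A' : Set (Fin n → Fin n) := L319.F n hn '' Ukl n (n-2) with hA'
  set B' : Set (Fin n → Fin n) :=
    Set.range (fun p : Fin n × Fin n => L319.hf n hn p.1 p.2) with hB'
  have hA'T : A' ⊆ Ukl n 2 := by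
    rintro _ ⟨γ, hγ, rfl⟩
    exact (L319.F_spec n hn γ hγ).2.1
  have hB'T : B' ⊆ Ukl n 2 := by
    rintro _ ⟨p, rfl⟩
    exact L319.hf_mem n hn p.1 p.2
  have hdisj : Disjoint A' B' := by
    rw [Set.disjoint_left]
    rintro z ⟨γ, hγ, rfl⟩ ⟨p, hp⟩
    exact L319.hf_ne_F n hn p.1 p.2 γ hγ hp.symm
  have hcardA : A'.ncard = (Ukl n (n-2)).ncard :=
    Set.ncard_image_of_injOn (L319.F_injOn n hn)
  have hcardB : B'.ncard = n * n := by
    rw [hB', ← Set.image_univ,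
      Set.ncard_image_of_injOn ((L319.hf_param_inj n hn).injOn),
      Set.ncard_univ, Nat.card_eq_fintype_card, Fintype.card_prod, Fintype.card_fin]
  have hle : n * (n - 1) / 2 ≤ n * n :=
    le_trans (Nat.div_le_self _ 2) (Nat.mul_le_mul_left n (by omega))
  calc (Ukl n (n-2)).ncard + n * (n - 1) / 2
      = A'.ncard + n * (n - 1) / 2 := by rw [hcardA]
    _ ≤ A'.ncard + B'.ncard := by rw [hcardB]; omega
    _ = (A' ∪ B').ncard :=
        (Set.ncard_union_eq hdisj (Set.toFinite _) (Set.toFinite _)).symm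
    _ ≤ (Ukl n 2).ncard :=
        Set.ncard_le_ncard (Set.union_subset hA'T hB'T) (Set.toFinite _)
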